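/- (Sufficiency part of the representation of irrotational metric anomalies.) Let L be a connection on Ω and g a metric on Ω with non-metricity Q and lowered curvature R. Suppose (i) the skew part of R in its last two indices vanishes identically: R_{ijkl} = R_{ijlk} on Ω (i.e. θ = 0); (ii) there is a smooth field q : Ω → Sym(3,ℝ) of symmetric 3×3 matrices with Q_{kij} = −2∇_k q_{ij} on Ω, where ∇_k q_{ij} := ∂_k q_{ij} − L^p_{ki} q_{pj} − L^p_{kj} q_{ip}; and (iii) the symmetric matrix field g − 2q is positive definite at every point of Ω. Then the symmetric part of R in its last two indices also vanishes identically, R_{ijkl} + R_{ijlk} = 0 (i.e. ζ = 0); hence R_{ijkl} ≡ 0 on Ω. -/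

import Mathlib

noncomputable section

/-- Points of ℝ³. -/
abbrev E3 := Fin 3 → ℝ

/-- Partial derivative of `f` along the `j`-th coordinate at `x`. -/
def pd (f : E3 → ℝ) (j : Fin 3) (x : E3) : ℝ :=
  fderiv ℝ f x (Pi.single j 1)

/-- A connection coefficient field: `L x i j k = L^i_{jk}(x)`. -/
abbrev Conn := E3 → Fin 3 → Fin 3 → Fin 3 → ℝ

/-- Smoothness of a connection on `Ω`. -/
def ConnSmooth (L : Conn) (Ω : Set E3) : Prop :=
  ∀ i j k, ContDiffOn ℝ (⊤ : ℕ∞) (fun x => L x i j k) Ω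

/-- Torsion of a connection: `torsion L x i j k = T_{jk}^i = (1/2)(L^i_{jk} - L^i_{kj})`. -/
def torsion (L : Conn) (x : E3) (i j k : Fin 3) : ℝ :=
  (L x i j k - L x i k j) / 2

/-- Curvature of a connection: `curv L x p j i q = R_{jiq}^p`. -/
def curv (L : Conn) (x : E3) (p j i q : Fin 3) : ℝ :=
  pd (fun y => L y p i q) j x - pd (fun y => L y p j q) i x
    + ∑ h, (L x h i q * L x p j h - L x h j q * L x p i h)

/-- A metric field. -/
abbrev Metric := E3 → Matrix (Fin 3) (Fin 3) ℝ

/-- `g` is a metric on `Ω`: smooth entries, symmetric and positive definite on `Ω`. -/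
def MetricOn (g : Metric) (Ω : Set E3) : Prop :=
  (∀ i j, ContDiffOn ℝ (⊤ : ℕ∞) (fun x => g x i j) Ω) ∧
  (∀ x ∈ Ω, (g x).IsSymm) ∧ (∀ x ∈ Ω, (g x).PosDef)

/-- Non-metricity of `(L, g)`: `nm L g x k i j = Q_{kij}`. -/
def nm (L : Conn) (g : Metric) (x : E3) (k i j : Fin 3) : ℝ :=
  - pd (fun y => g y i j) k x + ∑ p, (L x p k j * g x i p + L x p k i * g x j p)

/-- Lowered curvature: `lcurv L g x i j k l = R_{ijkl} = g_{lp} R_{ijk}^p`. -/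
def lcurv (L : Conn) (g : Metric) (x : E3) (i j k l : Fin 3) : ℝ :=
  ∑ p, g x l p * curv L x p i j k

/-- Covariant derivative of a symmetric tensor field `q`:
`covq L q k i j x = ∇_k q_{ij}`. -/
def covq (L : Conn) (q : E3 → Matrix (Fin 3) (Fin 3) ℝ) (k i j : Fin 3) (x : E3) : ℝ :=
  pd (fun y => q y i j) k x - ∑ p, (L x p k i * q x p j + L x p k j * q x i p)


section IMAhelpers

open Matrix

variable {f g : E3 → ℝ} {x : E3} {j : Fin 3}

lemma pd_congr {Ω : Set E3} (hΩ : IsOpen Ω) (hx : x ∈ Ω)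
    (h : ∀ y ∈ Ω, f y = g y) : pd f j x = pd g j x := by
  have : f =ᶠ[nhds x] g := by
    filter_upwards [hΩ.mem_nhds hx] with y hy using h y hy
  simp [pd, this.fderiv_eq]

lemma pd_add (hf : DifferentiableAt ℝ f x) (hg : DifferentiableAt ℝ g x) :
    pd (fun y => f y + g y) j x = pd f j x + pd g j x := by
  simp [pd, fderiv_fun_add hf hg]

lemma pd_mul (hf : DifferentiableAt ℝ f x) (hg : DifferentiableAt ℝ g x) :
    pd (fun y => f y * g y) j x = pd f j x * g x + f x * pd g j x := by
  simp [pd, fderiv_fun_mul hf hg]; ring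

lemma pd_const_mul (hf : DifferentiableAt ℝ f x) (c : ℝ) :
    pd (fun y => c * f y) j x = c * pd f j x := by
  simp [pd, fderiv_const_mul hf c]

lemma pd_sum {F : Fin 3 → E3 → ℝ} (h : ∀ p, DifferentiableAt ℝ (F p) x) :
    pd (fun y => ∑ p, F p y) j x = ∑ p, pd (F p) j x := by
  simp [pd, fderiv_fun_sum (fun p _ => h p)]

lemma pd_comm (hf : ContDiffAt ℝ (⊤ : ℕ∞) f x) (i j : Fin 3) :
    pd (fun y => pd f i y) j x = pd (fun y => pd f j y) i x := by
  have hsymm := hf.isSymmSndFDerivAt (by simp; exact WithTop.coe_le_coe.2 (le_top : (2:ℕ∞) ≤ ⊤))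
  have hd : DifferentiableAt ℝ (fderiv ℝ f) x := by
    have := hf.fderiv_right (m := (⊤ : ℕ∞)) (by norm_cast)
    exact this.differentiableAt (by norm_cast)
  have key : ∀ a b : Fin 3, pd (fun y => pd f a y) b x
      = fderiv ℝ (fderiv ℝ f) x (Pi.single b 1) (Pi.single a 1) := by
    intro a b
    have : pd (fun y => pd f a y) b x
        = fderiv ℝ (fun y => (fderiv ℝ f y) (Pi.single a 1)) x (Pi.single b 1) := rfl
    rw [this, fderiv_clm_apply hd (differentiableAt_const _)]
    simp
  rw [key, key, hsymm]

lemma trace_transpose_mul_self_eq (N : Matrix (Fin 3) (Fin 3) ℝ) :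
    Matrix.trace (Nᵀ * N) = ∑ i, ∑ j, (N j i)^2 := by
  simp [Matrix.trace, Matrix.mul_apply, Matrix.diag, sq]

lemma eq_zero_of_trace_transpose_mul_self (N : Matrix (Fin 3) (Fin 3) ℝ)
    (h : Matrix.trace (Nᵀ * N) = 0) : N = 0 := by
  rw [trace_transpose_mul_self_eq] at h
  have h1 : ∀ i ∈ Finset.univ, ∀ j ∈ Finset.univ, (N j i : ℝ)^2 = 0 := by
    have := (Finset.sum_eq_zero_iff_of_nonneg (fun i _ =>
      Finset.sum_nonneg (fun j _ => sq_nonneg (N j i)))).1 h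
    intro i hi j hj
    exact (Finset.sum_eq_zero_iff_of_nonneg (fun j _ => sq_nonneg (N j i))).1 (this i hi) j hj
  ext i j
  simpa using pow_eq_zero_iff (n := 2) (by norm_num) |>.1 (h1 j (by simp) i (by simp))

open scoped MatrixOrder in
lemma matrix_key {P h S : Matrix (Fin 3) (Fin 3) ℝ} (hP : P.PosDef) (hh : h.PosDef)
    (hS : Sᵀ = S) (hK : (h * P * S)ᵀ = -(h * P * S)) : S = 0 := by
  have hPs : P.PosSemidef := hP.posSemidef
  have hhi : (h⁻¹).PosDef := hh.inv
  have hhis : (h⁻¹).PosSemidef := hhi.posSemidef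
  obtain ⟨B, hBsym, hB2⟩ : ∃ B : Matrix (Fin 3) (Fin 3) ℝ, Bᵀ = B ∧ B * B = P :=
    ⟨CFC.sqrt P, by simpa [Matrix.IsHermitian, Matrix.conjTranspose_eq_transpose_of_trivial]
        using (CFC.sqrt_nonneg P).posSemidef.isHermitian, CFC.sqrt_mul_sqrt_self P hPs.nonneg⟩
  obtain ⟨C, hCsym, hC2⟩ : ∃ C : Matrix (Fin 3) (Fin 3) ℝ, Cᵀ = C ∧ C * C = h⁻¹ :=
    ⟨CFC.sqrt h⁻¹, by simpa [Matrix.IsHermitian, Matrix.conjTranspose_eq_transpose_of_trivial]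
        using (CFC.sqrt_nonneg h⁻¹).posSemidef.isHermitian, CFC.sqrt_mul_sqrt_self h⁻¹ hhis.nonneg⟩
  have hhu : IsUnit h.det := (Matrix.isUnit_iff_isUnit_det h).1 hh.isUnit
  have hinvmul : h⁻¹ * h = 1 := Matrix.nonsing_inv_mul h hhu
  set K := h * P * S with hKdef
  set N := B * S * B with hNdef
  set M := C * K * C with hMdef
  have hNsym : Nᵀ = N := by
    rw [hNdef, Matrix.transpose_mul, Matrix.transpose_mul, hS, hBsym, Matrix.mul_assoc]
  have hMskew : Mᵀ = -M := by
    rw [hMdef, Matrix.transpose_mul, Matrix.transpose_mul, hK, hCsym]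
    simp [Matrix.mul_assoc]
  have tN : Matrix.trace (N * N) = Matrix.trace (S * P * S * P) := by
    have e : N * N = B * (S * P * S * B) := by
      rw [hNdef, ← hB2]; noncomm_ring
    rw [e, Matrix.trace_mul_comm, Matrix.mul_assoc (S * P * S) B B, hB2]
  have tM : Matrix.trace (M * M) = Matrix.trace (S * P * S * P) := by
    have e1 : M * M = C * (K * h⁻¹ * K * C) := by
      rw [hMdef, ← hC2]; noncomm_ring
    rw [e1, Matrix.trace_mul_comm]
    have e2 : K * h⁻¹ * K * C * C = K * h⁻¹ * K * h⁻¹ := by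
      rw [← hC2]; noncomm_ring
    rw [e2, hKdef]
    have e3 : h * P * S * h⁻¹ * (h * P * S) * h⁻¹ = h * (P * S * (h⁻¹ * h) * P * S * h⁻¹) := by
      noncomm_ring
    rw [e3, hinvmul, Matrix.trace_mul_comm]
    have e4 : P * S * 1 * P * S * h⁻¹ * h = P * S * P * S * (h⁻¹ * h) := by noncomm_ring
    rw [e4, hinvmul, Matrix.mul_one]
    rw [show P * S * P * S = P * (S * P * S) from by noncomm_ring, Matrix.trace_mul_comm]
  have hNN : Matrix.trace (N * N) = Matrix.trace (Nᵀ * N) := by rw [hNsym]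
  have hMM : Matrix.trace (M * M) = -Matrix.trace (Mᵀ * M) := by
    rw [hMskew]; simp
  have hge : 0 ≤ Matrix.trace (Nᵀ * N) := by
    rw [trace_transpose_mul_self_eq]
    exact Finset.sum_nonneg (fun i _ => Finset.sum_nonneg (fun j _ => sq_nonneg _))
  have hge' : 0 ≤ Matrix.trace (Mᵀ * M) := by
    rw [trace_transpose_mul_self_eq]
    exact Finset.sum_nonneg (fun i _ => Finset.sum_nonneg (fun j _ => sq_nonneg _))
  have hzero : Matrix.trace (Nᵀ * N) = 0 := by
    have : Matrix.trace (Nᵀ * N) = -Matrix.trace (Mᵀ * M) := by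
      rw [← hNN, tN, ← tM, hMM]
    linarith
  have hN0 : N = 0 := eq_zero_of_trace_transpose_mul_self N hzero
  have hBu : IsUnit B.det := by
    have hd : B.det * B.det = P.det := by rw [← Matrix.det_mul, hB2]
    have hPd : 0 < P.det := hP.det_pos
    have hne : B.det ≠ 0 := by intro h0; rw [h0] at hd; simp at hd; linarith
    exact hne.isUnit
  have hfin : B⁻¹ * (B * S * B) * B⁻¹ = S := by
    rw [← Matrix.mul_assoc (B⁻¹) (B * S) B, ← Matrix.mul_assoc (B⁻¹) B S,
      Matrix.nonsing_inv_mul B hBu, Matrix.one_mul, Matrix.mul_assoc,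
      Matrix.mul_nonsing_inv B hBu, Matrix.mul_one]
  rw [← hfin, ← hNdef, hN0]
  simp

set_option maxHeartbeats 1000000 in
lemma compat_skew (Ω : Set E3) (hΩ : IsOpen Ω) (L : Conn) (hL : ConnSmooth L Ω)
    (G : Metric) (hGs : ∀ a b, ContDiffOn ℝ (⊤ : ℕ∞) (fun y => G y a b) Ω)
    (hGsym : ∀ x ∈ Ω, (G x).IsSymm)
    (hcompat : ∀ x ∈ Ω, ∀ m a b, pd (fun y => G y a b) m x
        = ∑ p, (L x p m b * G x a p + L x p m a * G x b p)) :
    ∀ x ∈ Ω, ∀ i j k l : Fin 3,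
      (∑ p, G x l p * curv L x p i j k) + (∑ p, G x k p * curv L x p i j l) = 0 := by
  intro x hx i j k l
  have hmem : Ω ∈ nhds x := hΩ.mem_nhds hx
  have dL : ∀ p a b, DifferentiableAt ℝ (fun y => L y p a b) x := fun p a b =>
    ((hL p a b).contDiffAt hmem).differentiableAt (by norm_cast)
  have dG : ∀ a b, DifferentiableAt ℝ (fun y => G y a b) x := fun a b =>
    ((hGs a b).contDiffAt hmem).differentiableAt (by norm_cast)
  have Ecl : pd (fun y => pd (fun z => G z k l) j y) i x
      = pd (fun y => pd (fun z => G z k l) i y) j x :=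
    pd_comm ((hGs k l).contDiffAt hmem) j i
  have e1 : pd (fun y => pd (fun z => G z k l) j y) i x
      = pd (fun y => ∑ p, (L y p j l * G y k p + L y p j k * G y l p)) i x :=
    pd_congr hΩ hx (fun y hy => hcompat y hy j k l)
  have e2 : pd (fun y => pd (fun z => G z k l) i y) j x
      = pd (fun y => ∑ p, (L y p i l * G y k p + L y p i k * G y l p)) j x :=
    pd_congr hΩ hx (fun y hy => hcompat y hy i k l)
  have E : pd (fun y => ∑ p, (L y p j l * G y k p + L y p j k * G y l p)) i x
      = pd (fun y => ∑ p, (L y p i l * G y k p + L y p i k * G y l p)) j x := by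
    rw [← e1, ← e2]; exact Ecl
  have expand : ∀ m n : Fin 3,
      pd (fun y => ∑ p, (L y p m l * G y k p + L y p m k * G y l p)) n x
      = ∑ p, (pd (fun y => L y p m l) n x * G x k p + L x p m l * pd (fun y => G y k p) n x
          + (pd (fun y => L y p m k) n x * G x l p + L x p m k * pd (fun y => G y l p) n x)) := by
    intro m n
    rw [pd_sum (F := fun p y => L y p m l * G y k p + L y p m k * G y l p)
      (fun p => ((dL p m l).mul (dG k p)).add ((dL p m k).mul (dG l p)))]
    refine Finset.sum_congr rfl (fun p _ => ?_)
    rw [pd_add ((dL p m l).fun_mul (dG k p)) ((dL p m k).fun_mul (dG l p)),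
      pd_mul (dL p m l) (dG k p), pd_mul (dL p m k) (dG l p)]
  rw [expand j i, expand i j] at E
  simp only [hcompat x hx] at E
  have hGq : ∀ a b : Fin 3, G x a b = G x b a := fun a b => (hGsym x hx).apply b a
  simp only [curv, Fin.sum_univ_three] at E ⊢
  simp only [hGq 1 0, hGq 2 0, hGq 2 1] at E ⊢
  linear_combination E

end IMAhelpers

open Matrix in
/-- Sufficiency part of the representation of irrotational metric anomalies: if
`θ = 0`, `Q_{kij} = -2∇_k q_{ij}` with `q` smooth and symmetric, and `g - 2q` is
positive definite, then `ζ = 0`, hence the lowered curvature vanishes identically. -/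
theorem irrotational_metric_anomalies_sufficiency
    (Ω : Set E3) (hΩ : IsOpen Ω) (hne : Ω.Nonempty)
    (L : Conn) (hL : ConnSmooth L Ω) (g : Metric) (hg : MetricOn g Ω)
    (htheta : ∀ x ∈ Ω, ∀ i j k l : Fin 3, lcurv L g x i j k l = lcurv L g x i j l k)
    (q : E3 → Matrix (Fin 3) (Fin 3) ℝ)
    (hqsmooth : ∀ i j, ContDiffOn ℝ (⊤ : ℕ∞) (fun x => q x i j) Ω)
    (hqsym : ∀ x ∈ Ω, (q x).IsSymm)
    (hrep : ∀ x ∈ Ω, ∀ k i j : Fin 3, nm L g x k i j = -2 * covq L q k i j x)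
    (hpos : ∀ x ∈ Ω, (g x - 2 • q x).PosDef) :
    (∀ x ∈ Ω, ∀ i j k l : Fin 3, lcurv L g x i j k l + lcurv L g x i j l k = 0) ∧
    (∀ x ∈ Ω, ∀ i j k l : Fin 3, lcurv L g x i j k l = 0) := by
  classical
  have hmain : ∀ x ∈ Ω, ∀ i j k l : Fin 3, lcurv L g x i j k l = 0 := by
    -- the modified metric
    set G : Metric := fun y => g y - 2 • q y with hGdef
    have hGentry : ∀ (y : E3) (a b : Fin 3), G y a b = g y a b - 2 * q y a b := by
      intro y a b
      show g y a b - (2:ℕ) • (q y a b) = g y a b - 2 * q y a b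
      rw [nsmul_eq_mul]; norm_num
    have hGs : ∀ a b, ContDiffOn ℝ (⊤ : ℕ∞) (fun y => G y a b) Ω := by
      intro a b
      have : (fun y => G y a b) = fun y => g y a b - 2 * q y a b := by
        funext y; exact hGentry y a b
      rw [this]
      exact (hg.1 a b).sub (contDiffOn_const.mul (hqsmooth a b))
    have hGsym : ∀ x ∈ Ω, (G x).IsSymm := by
      intro x hx
      have h1 := hg.2.1 x hx
      have h2 := hqsym x hx
      show (G x)ᵀ = G x
      rw [hGdef]
      simp only [Matrix.transpose_sub, Matrix.transpose_smul]
      rw [h1.eq, h2.eq]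
    have hGcompat : ∀ x ∈ Ω, ∀ m a b, pd (fun y => G y a b) m x
        = ∑ p, (L x p m b * G x a p + L x p m a * G x b p) := by
      intro x hx m a b
      have hmem : Ω ∈ nhds x := hΩ.mem_nhds hx
      have dg : DifferentiableAt ℝ (fun y => g y a b) x :=
        ((hg.1 a b).contDiffAt hmem).differentiableAt (by norm_cast)
      have dq : DifferentiableAt ℝ (fun y => q y a b) x :=
        ((hqsmooth a b).contDiffAt hmem).differentiableAt (by norm_cast)
      have hpdG : pd (fun y => G y a b) m x
          = pd (fun y => g y a b) m x - 2 * pd (fun y => q y a b) m x := by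
        have hfun : (fun y => G y a b) = fun y => g y a b + (-2) * q y a b := by
          funext y; rw [hGentry y a b]; ring
        rw [hfun, pd_add dg ((differentiableAt_const (-2 : ℝ)).fun_mul dq)]
        rw [show (fun y => -2 * q y a b) = fun y => (-2 : ℝ) * q y a b from rfl]
        rw [pd_const_mul dq (-2 : ℝ)]
        ring
      have hrepE := hrep x hx m a b
      have hq : ∀ c d : Fin 3, q x c d = q x d c := fun c d => (hqsym x hx).apply d c
      rw [hpdG]
      simp only [nm, covq, Fin.sum_univ_three] at hrepE
      simp only [hGentry, Fin.sum_univ_three]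
      linear_combination (-1 : ℝ) * hrepE + 2 * L x 0 m a * (hq b 0)
        + 2 * L x 1 m a * (hq b 1) + 2 * L x 2 m a * (hq b 2)
    have hskew := compat_skew Ω hΩ L hL G hGs hGsym hGcompat
    intro x hx i j k l
    have hmemg : (g x).PosDef := hg.2.2 x hx
    have hgu : IsUnit (g x).det := (Matrix.isUnit_iff_isUnit_det (g x)).1 hmemg.isUnit
    set A : Matrix (Fin 3) (Fin 3) ℝ := Matrix.of (fun p k => curv L x p i j k) with hAdef
    have hgA_entry : ∀ a b : Fin 3, (g x * A) a b = lcurv L g x i j b a := by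
      intro a b
      simp only [Matrix.mul_apply, hAdef, Matrix.of_apply, lcurv]
    have hS : (g x * A)ᵀ = g x * A := by
      ext a b
      rw [Matrix.transpose_apply, hgA_entry b a, hgA_entry a b]
      exact htheta x hx i j a b
    have hGA_entry : ∀ a b : Fin 3, (G x * A) a b = ∑ p, G x a p * curv L x p i j b := by
      intro a b
      simp only [Matrix.mul_apply, hAdef, Matrix.of_apply]
    have hK : (G x * A)ᵀ = -(G x * A) := by
      ext a b
      rw [Matrix.transpose_apply, Matrix.neg_apply, hGA_entry b a, hGA_entry a b]
      have := hskew x hx i j a b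
      linarith
    have hP : ((g x)⁻¹).PosDef := hmemg.inv
    have hh : (G x).PosDef := hpos x hx
    have hred : G x * (g x)⁻¹ * (g x * A) = G x * A := by
      rw [Matrix.mul_assoc, ← Matrix.mul_assoc ((g x)⁻¹) (g x) A,
        Matrix.nonsing_inv_mul _ hgu, Matrix.one_mul]
    have hS0 : g x * A = 0 := by
      refine matrix_key hP hh hS ?_
      rw [hred]; exact hK
    have : lcurv L g x i j k l = (g x * A) l k := by
      simp only [Matrix.mul_apply, hAdef, Matrix.of_apply, lcurv]
    rw [this, hS0, Matrix.zero_apply]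
  refine ⟨fun x hx i j k l => ?_, hmain⟩
  rw [hmain x hx i j k l, hmain x hx i j l k]
  ring
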